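/- arXiv:1002.2487 — 3 statements merged into one kernel-verified Lean document; each statement's English description precedes it below -/
import Mathlib

section
/- Fix 0 < α < 1/2 with normal α-quantile z_α, and c ≥ 0 with |z_α| ≥ 2c. Define ψ(ρ,u) = c·ρ·u² + ln F_α(|z_α| + ρu) for ρ ≥ 0 and 0 ≤ u ≤ 1, where F_α(z) = (∫_z^∞ e^{-t²/2} dt)/(∫_{|z_α|}^∞ e^{-t²/2} dt). Then for every fixed ρ > 0, the function u ↦ ψ(ρ,u) is strictly decreasing on [0,1]. -/
open MeasureTheory Real Set Filter

lemma gauss_rw : ∀ t : ℝ, -t ^ 2 / 2 = -(1/2 : ℝ) * t ^ 2 := fun t => by ring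

lemma gauss_integrable : Integrable (fun t : ℝ => Real.exp (-t ^ 2 / 2)) := by
  simp_rw [gauss_rw]
  exact integrable_exp_neg_mul_sq (by norm_num)

lemma gauss_int_pos (x : ℝ) : 0 < ∫ t in Set.Ioi x, Real.exp (-t ^ 2 / 2) := by
  rw [setIntegral_pos_iff_support_of_nonneg_ae
    (Filter.Eventually.of_forall fun t => (Real.exp_pos _).le)
    gauss_integrable.integrableOn]
  have : Function.support (fun t : ℝ => Real.exp (-t ^ 2 / 2)) = Set.univ := by
    ext t; simp [Real.exp_ne_zero]
  rw [this, Set.univ_inter, Real.volume_Ioi]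
  simp

lemma gauss_decomp (x : ℝ) : (∫ t in Set.Ioi x, Real.exp (-t ^ 2 / 2)) =
    (∫ t in Set.Ioi (0:ℝ), Real.exp (-t ^ 2 / 2)) - ∫ t in (0:ℝ)..x, Real.exp (-t ^ 2 / 2) := by
  rw [← intervalIntegral.integral_Iic_sub_Iic gauss_integrable.integrableOn
    gauss_integrable.integrableOn]
  have h := fun y : ℝ => MeasureTheory.integral_add_compl (measurableSet_Iic (a := y)) gauss_integrable
  have h0 := h 0
  have hx := h x
  rw [Set.compl_Iic] at h0 hx
  linarith

lemma gauss_hasDeriv (x : ℝ) :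
    HasDerivAt (fun y => ∫ t in Set.Ioi y, Real.exp (-t ^ 2 / 2)) (-(Real.exp (-x ^ 2 / 2))) x := by
  have hcont : Continuous (fun t : ℝ => Real.exp (-t ^ 2 / 2)) := by continuity
  have h1 : HasDerivAt (fun y => ∫ t in (0:ℝ)..y, Real.exp (-t ^ 2 / 2)) (Real.exp (-x ^ 2 / 2)) x :=
    intervalIntegral.integral_hasDerivAt_right gauss_integrable.intervalIntegrable
      (hcont.stronglyMeasurableAtFilter _ _) hcont.continuousAt
  have h2 := (hasDerivAt_const x (∫ t in Set.Ioi (0:ℝ), Real.exp (-t ^ 2 / 2))).sub h1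
  simp only [zero_sub] at h2
  exact h2.congr_of_eventuallyEq (Filter.Eventually.of_forall fun y => gauss_decomp y)

lemma gauss_mul_integrable : Integrable (fun t : ℝ => t * Real.exp (-t ^ 2 / 2)) := by
  simp_rw [gauss_rw]
  exact integrable_mul_exp_neg_mul_sq (by norm_num)

lemma gauss_tail_id (x : ℝ) :
    (∫ t in Set.Ioi x, t * Real.exp (-t ^ 2 / 2)) = Real.exp (-x ^ 2 / 2) := by
  have hderiv : ∀ t ∈ Set.Ici x, HasDerivAt (fun s : ℝ => -Real.exp (-s ^ 2 / 2))
      (t * Real.exp (-t ^ 2 / 2)) t := by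
    intro t _
    have hu : HasDerivAt (fun s : ℝ => -s ^ 2 / 2) (-t) t := by
      have h := ((hasDerivAt_pow 2 t).neg.div_const 2)
      refine h.congr_deriv ?_
      push_cast; ring
    have h2 := (hu.exp).neg
    refine h2.congr_deriv ?_
    ring
  have htend : Tendsto (fun s : ℝ => -Real.exp (-s ^ 2 / 2)) atTop (nhds 0) := by
    have h1 : Tendsto (fun s : ℝ => -s ^ 2 / 2) atTop atBot := by
      have h := (tendsto_pow_atTop (n := 2) (by norm_num)
        (α := ℝ)).atTop_div_const (r := 2) (by norm_num)
      have h2 := tendsto_neg_atTop_atBot.comp h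
      refine h2.congr fun s => by simp [neg_div]
    have := (Real.tendsto_exp_atBot.comp h1).neg
    simpa using this
  have := integral_Ioi_of_hasDerivAt_of_tendsto' hderiv gauss_mul_integrable.integrableOn htend
  simpa using this

lemma gauss_tail_lt {x : ℝ} (hx : 0 < x) :
    x * (∫ t in Set.Ioi x, Real.exp (-t ^ 2 / 2)) < Real.exp (-x ^ 2 / 2) := by
  have hint : IntegrableOn (fun t : ℝ => (t - x) * Real.exp (-t ^ 2 / 2)) (Set.Ioi x) := by
    have := (gauss_mul_integrable.sub (gauss_integrable.const_mul x)).integrableOn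
      (s := Set.Ioi x)
    refine this.congr_fun (fun t _ => by simp only [Pi.sub_apply]; ring) measurableSet_Ioi
  have hpos : 0 < ∫ t in Set.Ioi x, (t - x) * Real.exp (-t ^ 2 / 2) := by
    rw [setIntegral_pos_iff_support_of_nonneg_ae]
    · rw [Set.inter_eq_right.mpr]
      · rw [Real.volume_Ioi]; simp
      · intro t ht
        simp only [Function.mem_support]
        have : 0 < (t - x) * Real.exp (-t ^ 2 / 2) :=
          mul_pos (by simpa using (Set.mem_Ioi.mp ht)) (Real.exp_pos _)
        positivity
    · filter_upwards [ae_restrict_mem measurableSet_Ioi] with t ht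
      exact mul_nonneg (by simpa using (Set.mem_Ioi.mp ht).le) (Real.exp_pos _).le
    · exact hint
  have hsplit : (∫ t in Set.Ioi x, (t - x) * Real.exp (-t ^ 2 / 2)) =
      (∫ t in Set.Ioi x, t * Real.exp (-t ^ 2 / 2)) -
        x * ∫ t in Set.Ioi x, Real.exp (-t ^ 2 / 2) := by
    rw [← MeasureTheory.integral_const_mul, ← MeasureTheory.integral_sub
      gauss_mul_integrable.integrableOn ((gauss_integrable.const_mul x).integrableOn)]
    exact setIntegral_congr_fun measurableSet_Ioi fun t _ => by ring
  rw [hsplit, gauss_tail_id] at hpos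
  linarith

/-- For `|z_α| ≥ 2c`, the function `u ↦ ψ(ρ,u) = cρu² + ln F_α(|z_α| + ρu)`
is strictly decreasing on `[0,1]` for every fixed `ρ > 0`. -/
theorem psi_strictAnti_in_u
    (α c zα : ℝ) (hα0 : 0 < α) (hα1 : α < 1 / 2) (hc : 0 ≤ c)
    (hz : ∫ t in Set.Iic zα, Real.exp (-t ^ 2 / 2) = α * Real.sqrt (2 * Real.pi))
    (hzc : 2 * c ≤ |zα|)
    (ψ : ℝ → ℝ → ℝ)
    (hψ : ∀ ρ u, ψ ρ u = c * ρ * u ^ 2 +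
      Real.log ((∫ t in Set.Ioi (|zα| + ρ * u), Real.exp (-t ^ 2 / 2)) /
        (∫ t in Set.Ioi |zα|, Real.exp (-t ^ 2 / 2)))) :
    ∀ ρ : ℝ, 0 < ρ → StrictAntiOn (ψ ρ) (Set.Icc (0 : ℝ) 1) := by
  intro ρ hρ
  set G : ℝ → ℝ := fun x => ∫ t in Set.Ioi x, Real.exp (-t ^ 2 / 2) with hG
  have hGpos : ∀ x, 0 < G x := fun x => gauss_int_pos x
  -- derivative of ψ ρ at any point u
  have hd : ∀ u : ℝ, HasDerivAt (ψ ρ)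
      (c * ρ * (2 * u) + (G (|zα| + ρ * u))⁻¹ *
        (-(Real.exp (-(|zα| + ρ * u) ^ 2 / 2)) * ρ)) u := by
    intro u
    set x0 := |zα| + ρ * u with hx0
    have h1 : HasDerivAt (fun v : ℝ => c * ρ * v ^ 2) (c * ρ * (2 * u)) u := by
      have := (hasDerivAt_pow 2 u).const_mul (c * ρ)
      simpa using this
    have hinner : HasDerivAt (fun v : ℝ => |zα| + ρ * v) ρ u := by
      simpa using ((hasDerivAt_id u).const_mul ρ).const_add |zα|
    have hGd : HasDerivAt (fun v : ℝ => G (|zα| + ρ * v))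
        (-(Real.exp (-x0 ^ 2 / 2)) * ρ) u :=
      HasDerivAt.comp (h₂ := G) u (gauss_hasDeriv x0) hinner
    have hlog : HasDerivAt (fun v : ℝ => Real.log (G (|zα| + ρ * v)))
        ((G x0)⁻¹ * (-(Real.exp (-x0 ^ 2 / 2)) * ρ)) u :=
      HasDerivAt.comp (h₂ := Real.log) u (Real.hasDerivAt_log (hGpos x0).ne') hGd
    have := h1.add (hlog.sub_const (Real.log (G |zα|)))
    refine HasDerivAt.congr_of_eventuallyEq (by simpa using this)
      (Filter.Eventually.of_forall fun v => ?_)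
    rw [hψ]
    rw [Real.log_div (hGpos _).ne' (hGpos _).ne']
    rfl
  refine strictAntiOn_of_deriv_neg (convex_Icc 0 1)
    (fun u _ => (hd u).differentiableAt.continuousAt.continuousWithinAt) ?_
  intro u hu
  rw [interior_Icc] at hu
  rw [(hd u).deriv]
  set x0 := |zα| + ρ * u with hx0
  have hx0pos : 0 < x0 := by
    have := abs_nonneg zα
    have := mul_pos hρ hu.1
    simp only [hx0]; linarith
  have hkey : 2 * c * u * G x0 < Real.exp (-x0 ^ 2 / 2) := by
    have h2 : 2 * c * u ≤ x0 := by
      nlinarith [hu.1.le, hu.2.le, abs_nonneg zα, mul_pos hρ hu.1]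
    calc 2 * c * u * G x0 ≤ x0 * G x0 :=
          mul_le_mul_of_nonneg_right h2 (hGpos x0).le
      _ < Real.exp (-x0 ^ 2 / 2) := gauss_tail_lt hx0pos
  have hneg : 2 * c * u - Real.exp (-x0 ^ 2 / 2) / G x0 < 0 := by
    rw [sub_neg, lt_div_iff₀ (hGpos x0)]
    exact hkey
  have hfinal := mul_neg_of_pos_of_neg hρ hneg
  have heq : c * ρ * (2 * u) + (G x0)⁻¹ * (-(Real.exp (-x0 ^ 2 / 2)) * ρ)
      = ρ * (2 * c * u - Real.exp (-x0 ^ 2 / 2) / G x0) := by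
    field_simp
    ring
  rw [heq]
  exact hfinal
end

section
/- Let G : [a,b] → (0,∞) be twice continuously differentiable with G' ≥ 0 and G'' ≤ 0 on [a,b], let ϱ : [a,b] → [0,∞) be continuously differentiable with ϱ' < 0, let c ≥ 0 and γ ∈ (0,1], and define M(ρ) = exp(γ c ρ - γ(1-γ)ρ²/2). If sup_{a ≤ κ ≤ b} |ϱ'(κ)| ≤ G'(b)/(γ c G(b)), then the function κ ↦ M(ϱ(κ)) G(κ) is nondecreasing on [a,b]. -/
open Real Set

/-- Lemma A.1: if `G` is positive, increasing and concave (C²) on `[a,b]`,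
`ϱ ≥ 0` is C¹ with negative derivative, `M(ρ) = exp(γcρ - γ(1-γ)ρ²/2)` and
`sup |ϱ'| ≤ G'(b)/(γ c G(b))`, then `κ ↦ M(ϱ(κ)) G(κ)` is nondecreasing on
`[a,b]`. -/
theorem lemmaA1_monotone
    (a b c γ : ℝ) (hab : a ≤ b) (hc : 0 ≤ c) (hγ0 : 0 < γ) (hγ1 : γ ≤ 1)
    (G G' G'' ϱ ϱ' : ℝ → ℝ)
    (hGpos : ∀ x ∈ Icc a b, 0 < G x)
    (hGd : ∀ x ∈ Icc a b, HasDerivWithinAt G (G' x) (Icc a b) x)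
    (hGdd : ∀ x ∈ Icc a b, HasDerivWithinAt G' (G'' x) (Icc a b) x)
    (hG'cont : ContinuousOn G' (Icc a b))
    (hG''cont : ContinuousOn G'' (Icc a b))
    (hG' : ∀ x ∈ Icc a b, 0 ≤ G' x)
    (hG'' : ∀ x ∈ Icc a b, G'' x ≤ 0)
    (hϱ0 : ∀ x ∈ Icc a b, 0 ≤ ϱ x)
    (hϱd : ∀ x ∈ Icc a b, HasDerivWithinAt ϱ (ϱ' x) (Icc a b) x)
    (hϱ'cont : ContinuousOn ϱ' (Icc a b))
    (hϱ' : ∀ x ∈ Icc a b, ϱ' x < 0)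
    (hbound : ∀ κ ∈ Icc a b, |ϱ' κ| ≤ G' b / (γ * c * G b))
    (M : ℝ → ℝ)
    (hM : ∀ ρ, M ρ = Real.exp (γ * c * ρ - γ * (1 - γ) * ρ ^ 2 / 2)) :
    MonotoneOn (fun κ => M (ϱ κ) * G κ) (Icc a b) := by
  have haI : a ∈ Icc a b := ⟨le_refl a, hab⟩
  have hbI : b ∈ Icc a b := ⟨hab, le_refl b⟩
  -- c must be positive, otherwise the bound is contradictory
  rcases eq_or_lt_of_le hc with hc0 | hcpos
  · exfalso
    have h := hbound a haI
    rw [← hc0] at h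
    simp at h
    have := hϱ' a haI
    have habs : 0 < |ϱ' a| := abs_pos.mpr (ne_of_lt this)
    linarith
  have hden : 0 < γ * c * G b :=
    mul_pos (mul_pos hγ0 hcpos) (hGpos b hbI)
  -- G is monotone and G' antitone on [a,b]
  have hGcont : ContinuousOn G (Icc a b) := fun x hx => (hGd x hx).continuousWithinAt
  have hGmono : MonotoneOn G (Icc a b) := by
    apply monotoneOn_of_hasDerivWithinAt_nonneg (convex_Icc a b) hGcont
      (f' := G') (fun x hx => ?_) (fun x hx => ?_)
    · rw [interior_Icc] at hx ⊢
      exact (hGd x (Ioo_subset_Icc_self hx)).mono Ioo_subset_Icc_self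
    · rw [interior_Icc] at hx
      exact hG' x (Ioo_subset_Icc_self hx)
  have hG'anti : AntitoneOn G' (Icc a b) := by
    apply antitoneOn_of_hasDerivWithinAt_nonpos (convex_Icc a b) hG'cont
      (f' := G'') (fun x hx => ?_) (fun x hx => ?_)
    · rw [interior_Icc] at hx ⊢
      exact (hGdd x (Ioo_subset_Icc_self hx)).mono Ioo_subset_Icc_self
    · rw [interior_Icc] at hx
      exact hG'' x (Ioo_subset_Icc_self hx)
  -- rewrite M
  have hFeq : (fun κ => M (ϱ κ) * G κ)
      = fun κ => Real.exp (γ * c * ϱ κ - γ * (1 - γ) * ϱ κ ^ 2 / 2) * G κ := by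
    funext κ; rw [hM]
  rw [hFeq]
  apply monotoneOn_of_hasDerivWithinAt_nonneg (convex_Icc a b)
    (f' := fun x => Real.exp (γ * c * ϱ x - γ * (1 - γ) * ϱ x ^ 2 / 2)
      * ((γ * c * ϱ' x - γ * (1 - γ) * (2 * ϱ x * ϱ' x) / 2) * G x + G' x))
  · -- continuity
    apply ContinuousOn.mul _ hGcont
    apply Real.continuousOn_exp.comp _ (mapsTo_univ _ _)
    have hϱcont : ContinuousOn ϱ (Icc a b) := fun x hx => (hϱd x hx).continuousWithinAt
    exact ((continuousOn_const.mul hϱcont).sub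
      ((continuousOn_const.mul (hϱcont.pow 2)).div_const 2))
  · -- derivative
    intro x hx
    rw [interior_Icc] at hx ⊢
    have hxI : x ∈ Icc a b := Ioo_subset_Icc_self hx
    have hϱx : HasDerivWithinAt ϱ (ϱ' x) (Ioo a b) x :=
      (hϱd x hxI).mono Ioo_subset_Icc_self
    have hGx : HasDerivWithinAt G (G' x) (Ioo a b) x :=
      (hGd x hxI).mono Ioo_subset_Icc_self
    have hinner : HasDerivWithinAt
        (fun κ => γ * c * ϱ κ - γ * (1 - γ) * ϱ κ ^ 2 / 2)
        (γ * c * ϱ' x - γ * (1 - γ) * (2 * ϱ x * ϱ' x) / 2) (Ioo a b) x := by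
      have h1 : HasDerivWithinAt (fun κ => γ * c * ϱ κ) (γ * c * ϱ' x) (Ioo a b) x :=
        hϱx.const_mul _
      have h2 : HasDerivWithinAt (fun κ => ϱ κ ^ 2) (2 * ϱ x * ϱ' x) (Ioo a b) x := by
        have := hϱx.fun_pow 2
        simpa [mul_comm, mul_assoc, mul_left_comm] using this
      exact h1.sub ((h2.const_mul (γ * (1 - γ))).div_const 2)
    have hcomp : HasDerivWithinAt
        (fun κ => Real.exp (γ * c * ϱ κ - γ * (1 - γ) * ϱ κ ^ 2 / 2))
        (Real.exp (γ * c * ϱ x - γ * (1 - γ) * ϱ x ^ 2 / 2)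
          * (γ * c * ϱ' x - γ * (1 - γ) * (2 * ϱ x * ϱ' x) / 2)) (Ioo a b) x := by
      simpa [mul_comm] using hinner.exp
    have : HasDerivWithinAt (fun κ => Real.exp (γ * c * ϱ κ - γ * (1 - γ) * ϱ κ ^ 2 / 2) * G κ) _
        (Ioo a b) x := hcomp.fun_mul hGx
    convert this using 1
    ring
  · -- nonnegativity of the derivative
    intro x hx
    rw [interior_Icc] at hx
    have hxI : x ∈ Icc a b := Ioo_subset_Icc_self hx
    have hE : 0 < Real.exp (γ * c * ϱ x - γ * (1 - γ) * ϱ x ^ 2 / 2) := Real.exp_pos _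
    have key : 0 ≤ (γ * c * ϱ' x - γ * (1 - γ) * (2 * ϱ x * ϱ' x) / 2) * G x + G' x := by
      have hGxpos : 0 < G x := hGpos x hxI
      have hGbpos : 0 < G b := hGpos b hbI
      have hGle : G x ≤ G b := hGmono hxI hbI hx.2.le
      have hG'le : G' b ≤ G' x := hG'anti hxI hbI hx.2.le
      have hG'b : 0 ≤ G' b := hG' b hbI
      have hϱ'neg : ϱ' x < 0 := hϱ' x hxI
      have hϱxn : 0 ≤ ϱ x := hϱ0 x hxI
      have hb := hbound x hxI
      rw [abs_of_neg hϱ'neg, le_div_iff₀ hden] at hb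
      -- hb : -ϱ' x * (γ * c * G b) ≤ G' b
      have hstep1 : 0 ≤ -(γ * (1 - γ) * (2 * ϱ x * ϱ' x) / 2) * G x := by
        have h1γ : 0 ≤ 1 - γ := by linarith
        have h4 : 0 ≤ γ * (1 - γ) * ϱ x * (-(ϱ' x)) * G x :=
          mul_nonneg (mul_nonneg (mul_nonneg (mul_nonneg hγ0.le h1γ) hϱxn)
            (neg_nonneg.mpr hϱ'neg.le)) hGxpos.le
        nlinarith [h4]
      have hstep2 : 0 ≤ γ * c * ϱ' x * G x + G' x := by
        have h3 : -ϱ' x * (γ * c * G x) ≤ -ϱ' x * (γ * c * G b) := by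
          apply mul_le_mul_of_nonneg_left _ (by linarith)
          exact mul_le_mul_of_nonneg_left hGle (by positivity)
        nlinarith
      nlinarith
    positivity
end

section
/- Let γ₁ ∈ (0,1), q = 1/(1-γ₁), and let v : [0,T] → [0,∞) be integrable with V_t = ∫_0^t v_u du, and g : [0,T] → (0,∞) continuous. Then ∫_0^T g(t) (e^{-V_t} v_t)^{γ₁} dt ≤ (1 - e^{-V_T})^{γ₁} (∫_0^T g(t)^q dt)^{1/q}. -/
open Real MeasureTheory intervalIntegral Set

open Filter

open scoped ENNReal

theorem consumption_base_integrable (T : ℝ) (hT : 0 < T) (v : ℝ → ℝ)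
    (hvint : IntervalIntegrable v volume 0 T)
    (hv : ∀ t ∈ Icc (0:ℝ) T, 0 ≤ v t) :
    IntegrableOn (fun t => Real.exp (-∫ u in (0:ℝ)..t, v u) * v t) (Ioc (0:ℝ) T) volume := by
  set P : ℝ → ℝ := fun t => ∫ u in (0:ℝ)..t, v u with hP
  have hIcc : uIcc (0:ℝ) T = Icc 0 T := uIcc_of_le hT.le
  have hvIcc : IntegrableOn v (Icc 0 T) volume := by
    rw [integrableOn_Icc_iff_integrableOn_Ioc]; exact hvint.1
  have hsub : ∀ {a b : ℝ}, a ∈ Icc (0:ℝ) T → b ∈ Icc (0:ℝ) T →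
      IntervalIntegrable v volume a b := by
    intro a b ha hb
    exact hvint.mono_set (by rw [hIcc]; exact uIcc_subset_Icc ha hb)
  have hPcont : ContinuousOn P (Icc 0 T) := by
    have := intervalIntegral.continuousOn_primitive_interval (μ := volume) (f := v)
      (a := 0) (b := T) (by rw [hIcc]; exact hvIcc)
    rwa [hIcc] at this
  set cl : ℝ → ℝ := fun t => max 0 (min t T) with hcl
  have hclmem : ∀ t, cl t ∈ Icc (0:ℝ) T :=
    fun t => ⟨le_max_left _ _, max_le hT.le (min_le_right _ _)⟩
  have hclid : ∀ t ∈ Icc (0:ℝ) T, cl t = t := by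
    intro t ht; simp [hcl, min_eq_left ht.2, max_eq_right ht.1]
  set W : ℝ → ℝ := fun t => P (cl t) with hW
  have hWcont : Continuous W :=
    hPcont.comp_continuous (continuous_const.max (continuous_id.min continuous_const)) hclmem
  have hW0 : ∀ t, 0 ≤ W t := by
    intro t
    apply intervalIntegral.integral_nonneg (hclmem t).1
    intro u hu
    exact hv u ⟨hu.1, hu.2.trans (hclmem t).2⟩
  have hInt : IntegrableOn (fun t => Real.exp (-W t) * v t) (Ioc (0:ℝ) T) volume := by
    apply Integrable.bdd_mul (c := 1) hvint.1
      (Real.continuous_exp.comp hWcont.neg).aestronglyMeasurable.restrict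
    refine Eventually.of_forall (fun x => ?_)
    simp only [Function.comp_apply, Real.norm_eq_abs, abs_of_pos (Real.exp_pos _)]
    exact Real.exp_le_one_iff.mpr (neg_nonpos.mpr (hW0 x))
  apply hInt.congr_fun _ measurableSet_Ioc
  intro t ht
  simp only [hW, hclid t (Ioc_subset_Icc_self ht)]
  rfl

theorem consumption_key
    (T : ℝ) (hT : 0 < T) (v : ℝ → ℝ)
    (hvint : IntervalIntegrable v volume 0 T)
    (hv : ∀ t ∈ Icc (0:ℝ) T, 0 ≤ v t) :
    ∫ t in Ioc (0:ℝ) T, Real.exp (-∫ u in (0:ℝ)..t, v u) * v t ≤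
      1 - Real.exp (-∫ u in (0:ℝ)..T, v u) := by
  set P : ℝ → ℝ := fun t => ∫ u in (0:ℝ)..t, v u with hP
  set c : ℝ := P T with hc
  -- basic facts
  have hIcc : uIcc (0:ℝ) T = Icc 0 T := uIcc_of_le hT.le
  have hvIcc : IntegrableOn v (Icc 0 T) volume := by
    rw [integrableOn_Icc_iff_integrableOn_Ioc]; exact hvint.1
  have hsub : ∀ {a b : ℝ}, a ∈ Icc (0:ℝ) T → b ∈ Icc (0:ℝ) T →
      IntervalIntegrable v volume a b := by
    intro a b ha hb
    exact hvint.mono_set (by rw [hIcc]; exact uIcc_subset_Icc ha hb)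
  have hPadd : ∀ {a b : ℝ}, a ∈ Icc (0:ℝ) T → b ∈ Icc (0:ℝ) T →
      P b - P a = ∫ u in a..b, v u := by
    intro a b ha hb
    have := integral_add_adjacent_intervals
      (hsub (left_mem_Icc.2 hT.le) ha) (hsub ha hb)
    simp only [hP]
    linarith [this]
  have hPmono : MonotoneOn P (Icc 0 T) := by
    intro a ha b hb hab
    have h1 : P b - P a = ∫ u in a..b, v u := hPadd ha hb
    have h2 : 0 ≤ ∫ u in a..b, v u := by
      apply intervalIntegral.integral_nonneg hab
      intro u hu
      exact hv u ⟨le_trans ha.1 hu.1, le_trans hu.2 hb.2⟩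
    linarith
  have hPcont : ContinuousOn P (Icc 0 T) := by
    have := intervalIntegral.continuousOn_primitive_interval (μ := volume) (f := v)
      (a := 0) (b := T) (by rw [hIcc]; exact hvIcc)
    rwa [hIcc] at this
  have hP0 : P 0 = 0 := integral_same
  -- clamp
  set cl : ℝ → ℝ := fun t => max 0 (min t T) with hcl
  have hclmem : ∀ t, cl t ∈ Icc (0:ℝ) T :=
    fun t => ⟨le_max_left _ _, max_le hT.le (min_le_right _ _)⟩
  have hclid : ∀ t ∈ Icc (0:ℝ) T, cl t = t := by
    intro t ht; simp [hcl, min_eq_left ht.2, max_eq_right ht.1]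
  set W : ℝ → ℝ := fun t => P (cl t) with hW
  have hWcont : Continuous W :=
    hPcont.comp_continuous (continuous_const.max (continuous_id.min continuous_const))
      hclmem
  have hWeq : ∀ t ∈ Icc (0:ℝ) T, W t = P t := fun t ht => by
    simp only [hW]; rw [hclid t ht]
  have hW0 : ∀ t, 0 ≤ W t := by
    intro t
    have := hPmono (left_mem_Icc.2 hT.le) (hclmem t) (hclmem t).1
    rw [hP0] at this; exact this
  have hWc : ∀ t, W t ≤ c := by
    intro t
    exact hPmono (hclmem t) (right_mem_Icc.2 hT.le) (hclmem t).2
  have hc0 : 0 ≤ c := by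
    have := hW0 T; rwa [hWeq T (right_mem_Icc.2 hT.le)] at this
  -- the measure
  set μ : Measure ℝ := (volume.restrict (Ioc 0 T)).withDensity
    (fun t => ENNReal.ofReal (v t)) with hμ
  have hv_ae : 0 ≤ᵐ[volume.restrict (Ioc 0 T)] v :=
    ae_restrict_of_forall_mem measurableSet_Ioc
      (fun t ht => hv t (Ioc_subset_Icc_self ht))
  have hveq : ∫ t in Ioc (0:ℝ) T, v t = c := by
    rw [hc, hP, ← intervalIntegral.integral_of_le hT.le]
  have hμuniv : μ Set.univ = ENNReal.ofReal c := by
    rw [hμ, withDensity_apply _ MeasurableSet.univ, Measure.restrict_univ,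
      ← ofReal_integral_eq_lintegral_ofReal hvint.1 hv_ae, hveq]
  have hμfin : μ Set.univ ≠ ⊤ := by rw [hμuniv]; exact ENNReal.ofReal_ne_top
  -- layer cake
  have LC := lintegral_comp_eq_lintegral_meas_le_mul (μ := μ) (f := W)
    (g := fun s => Real.exp (-s))
    (Eventually.of_forall hW0) hWcont.measurable.aemeasurable
    (fun t _ => ((Real.continuous_exp.comp continuous_neg).intervalIntegrable 0 t))
    (Eventually.of_forall (fun s => (Real.exp_pos _).le))
  have hinner : ∀ y : ℝ, (∫ s in (0:ℝ)..y, Real.exp (-s)) = 1 - Real.exp (-y) := by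
    intro y
    rw [intervalIntegral.integral_comp_neg (fun s => Real.exp s)]
    rw [integral_exp]
    simp
  simp only [hinner] at LC
  -- J over the withDensity measure
  set Jμ : ℝ≥0∞ := ∫⁻ t, ENNReal.ofReal (Real.exp (-W t)) ∂μ with hJμ
  have hexpWmeas : Measurable fun t => ENNReal.ofReal (Real.exp (-W t)) :=
    (ENNReal.continuous_ofReal.comp (Real.continuous_exp.comp hWcont.neg)).measurable
  have hGmeas : Measurable fun t => ENNReal.ofReal (1 - Real.exp (-W t)) :=
    (ENNReal.continuous_ofReal.comp
      ((continuous_const.sub (Real.continuous_exp.comp hWcont.neg)))).measurable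
  have hsplit : Jμ + ∫⁻ t, ENNReal.ofReal (1 - Real.exp (-W t)) ∂μ = ENNReal.ofReal c := by
    rw [hJμ, ← lintegral_add_left hexpWmeas]
    have : ∀ t, ENNReal.ofReal (Real.exp (-W t)) + ENNReal.ofReal (1 - Real.exp (-W t))
        = 1 := by
      intro t
      rw [← ENNReal.ofReal_add (Real.exp_pos _).le
        (by have h := Real.exp_le_one_iff.mpr (neg_nonpos.mpr (hW0 t)); linarith)]
      norm_num
    simp only [this]
    rw [lintegral_one, hμuniv]
  -- lower bound on the tail measures
  have LB : ∀ s ∈ Ioi (0:ℝ), ENNReal.ofReal (c - s) ≤ μ {a | s ≤ W a} := by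
    intro s hs
    rcases le_or_gt s c with hsc | hsc
    · -- the first hitting time
      set S : Set ℝ := Icc 0 T ∩ W ⁻¹' (Ici s) with hS
      have hSclosed : IsClosed S :=
        isClosed_Icc.inter (isClosed_Ici.preimage hWcont)
      have hSne : S.Nonempty := ⟨T, right_mem_Icc.2 hT.le, by
        simp only [mem_preimage, mem_Ici]
        rw [hWeq T (right_mem_Icc.2 hT.le)]; exact hsc⟩
      have hSbdd : BddBelow S := ⟨0, fun x hx => hx.1.1⟩
      set τ : ℝ := sInf S with hτ
      have hτS : τ ∈ S := hSclosed.csInf_mem hSne hSbdd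
      have hτmem : τ ∈ Icc (0:ℝ) T := hτS.1
      have hτW : s ≤ W τ := hτS.2
      have hτpos : 0 < τ := by
        rcases hτmem.1.lt_or_eq with h | h
        · exact h
        · exfalso
          have : W 0 = 0 := by rw [hWeq 0 (left_mem_Icc.2 hT.le), hP0]
          rw [← h, this] at hτW
          exact absurd (lt_of_lt_of_le hs hτW) (lt_irrefl _)
      have hWτle : W τ ≤ s := by
        have htend : Tendsto W (nhdsWithin τ (Iio τ)) (nhds (W τ)) :=
          (hWcont.continuousAt.continuousWithinAt (s := Iio τ)).tendsto
        refine le_of_tendsto htend ?_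
        filter_upwards [Ioo_mem_nhdsLT_of_mem
          (show τ ∈ Ioc (0:ℝ) τ from ⟨hτpos, le_refl _⟩)] with t ht
        by_contra hcon
        push_neg at hcon
        have htS : t ∈ S := ⟨⟨ht.1.le, ht.2.le.trans hτmem.2⟩, le_of_lt hcon⟩
        exact absurd (csInf_le hSbdd htS) (not_le.2 ht.2)
      have hsub' : Ioc τ T ⊆ {a | s ≤ W a} := by
        intro a ha
        have haI : a ∈ Icc (0:ℝ) T := ⟨hτmem.1.trans ha.1.le, ha.2⟩
        have : P τ ≤ P a := hPmono hτmem haI ha.1.le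
        have hWa : W a = P a := hWeq a haI
        have hWτ : W τ = P τ := hWeq τ hτmem
        simp only [mem_setOf_eq, hWa]
        calc s ≤ W τ := hτW
        _ = P τ := hWτ
        _ ≤ P a := this
      have hμIoc : μ (Ioc τ T) = ENNReal.ofReal (P T - P τ) := by
        rw [hμ, withDensity_apply _ measurableSet_Ioc,
          Measure.restrict_restrict measurableSet_Ioc,
          inter_eq_left.2 (Ioc_subset_Ioc_left hτmem.1)]
        rw [← ofReal_integral_eq_lintegral_ofReal
          (hvint.1.mono_set (Ioc_subset_Ioc_left hτmem.1))
          (ae_restrict_of_forall_mem measurableSet_Ioc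
            (fun t ht => hv t ⟨(hτmem.1.trans ht.1.le), ht.2⟩))]
        congr 1
        rw [← intervalIntegral.integral_of_le hτmem.2]
        have := hPadd hτmem (right_mem_Icc.2 hT.le)
        linarith
      calc ENNReal.ofReal (c - s) ≤ ENNReal.ofReal (P T - P τ) := by
            apply ENNReal.ofReal_le_ofReal
            have : W τ = P τ := hWeq τ hτmem
            rw [hc]; linarith [hWτle, this]
      _ = μ (Ioc τ T) := hμIoc.symm
      _ ≤ μ {a | s ≤ W a} := measure_mono hsub'
    · rw [ENNReal.ofReal_eq_zero.2 (by linarith)]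
      exact zero_le
  -- lower bound the layer-cake integral
  have LClb : ENNReal.ofReal (c - (1 - Real.exp (-c)))
      ≤ ∫⁻ s in Ioi (0:ℝ), μ {a | s ≤ W a} * ENNReal.ofReal (Real.exp (-s)) := by
    have step1 : ∫⁻ s in Ioc (0:ℝ) c, ENNReal.ofReal ((c - s) * Real.exp (-s))
        = ENNReal.ofReal (c - (1 - Real.exp (-c))) := by
      have hcont : Continuous fun s : ℝ => (c - s) * Real.exp (-s) :=
        (continuous_const.sub continuous_id).mul (Real.continuous_exp.comp continuous_neg)
      rw [← ofReal_integral_eq_lintegral_ofReal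
        (hcont.integrableOn_Icc.mono_set Ioc_subset_Icc_self)
        (ae_restrict_of_forall_mem measurableSet_Ioc
          (fun s hs => mul_nonneg (by linarith [hs.2]) (Real.exp_pos _).le))]
      congr 1
      rw [← intervalIntegral.integral_of_le hc0]
      have : ∀ x : ℝ, HasDerivAt (fun y => (y - c + 1) * Real.exp (-y))
          ((c - x) * Real.exp (-x)) x := by
        intro x
        have h1 : HasDerivAt (fun y : ℝ => y - c + 1) 1 x :=
          ((hasDerivAt_id x).sub_const c).add_const 1
        have h2 : HasDerivAt (fun y : ℝ => Real.exp (-y)) (-Real.exp (-x)) x := by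
          have := (hasDerivAt_neg' x).exp
          simpa using this
        have := h1.mul h2
        exact this.congr_deriv (by ring)
      rw [intervalIntegral.integral_eq_sub_of_hasDerivAt (fun x _ => this x)
        (hcont.intervalIntegrable 0 c)]
      simp [Real.exp_zero]
      ring
    calc ENNReal.ofReal (c - (1 - Real.exp (-c)))
        = ∫⁻ s in Ioc (0:ℝ) c, ENNReal.ofReal ((c - s) * Real.exp (-s)) := step1.symm
    _ ≤ ∫⁻ s in Ioc (0:ℝ) c, μ {a | s ≤ W a} * ENNReal.ofReal (Real.exp (-s)) := by
        apply lintegral_mono_ae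
        filter_upwards [ae_restrict_mem measurableSet_Ioc] with s hs
        rw [ENNReal.ofReal_mul (by linarith [hs.2])]
        exact mul_le_mul_left (LB s hs.1) _
    _ ≤ ∫⁻ s in Ioi (0:ℝ), μ {a | s ≤ W a} * ENNReal.ofReal (Real.exp (-s)) :=
        lintegral_mono_set Ioc_subset_Ioi_self
  -- identify Jμ with the target integral
  have hvmeas : AEMeasurable (fun t => ENNReal.ofReal (v t))
      (volume.restrict (Ioc (0:ℝ) T)) :=
    ENNReal.measurable_ofReal.comp_aemeasurable hvint.1.aestronglyMeasurable.aemeasurable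
  have hInt : IntegrableOn (fun t => Real.exp (-W t) * v t) (Ioc (0:ℝ) T) volume := by
    apply Integrable.bdd_mul (c := 1) hvint.1
      (Real.continuous_exp.comp hWcont.neg).aestronglyMeasurable.restrict
    refine Eventually.of_forall (fun x => ?_)
    simp only [Function.comp_apply, Real.norm_eq_abs, abs_of_pos (Real.exp_pos _)]
    exact Real.exp_le_one_iff.mpr (neg_nonpos.mpr (hW0 x))
  have hJμ_eq : Jμ = ENNReal.ofReal (∫ t in Ioc (0:ℝ) T, Real.exp (-W t) * v t) := by
    rw [hJμ, hμ, lintegral_withDensity_eq_lintegral_mul₀ hvmeas hexpWmeas.aemeasurable]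
    rw [ofReal_integral_eq_lintegral_ofReal hInt
      (by filter_upwards [hv_ae] with t ht
          exact mul_nonneg (Real.exp_pos _).le ht)]
    apply lintegral_congr
    intro t
    simp only [Pi.mul_apply]
    rw [ENNReal.ofReal_mul (Real.exp_pos (-W t)).le, mul_comm]
  -- combine everything
  have h1mec : 0 ≤ 1 - Real.exp (-c) := by
    have := Real.exp_le_one_iff.mpr (neg_nonpos.mpr hc0); linarith
  have hcq : 0 ≤ c - (1 - Real.exp (-c)) := by
    have := Real.add_one_le_exp (-c); linarith
  have hfinal : Jμ ≤ ENNReal.ofReal (1 - Real.exp (-c)) := by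
    have h1 : Jμ + ENNReal.ofReal (c - (1 - Real.exp (-c))) ≤ ENNReal.ofReal c := by
      calc Jμ + ENNReal.ofReal (c - (1 - Real.exp (-c)))
          ≤ Jμ + ∫⁻ t, ENNReal.ofReal (1 - Real.exp (-W t)) ∂μ := by
            gcongr
            rw [LC]
            exact LClb
      _ = ENNReal.ofReal c := hsplit
    have h2 : ENNReal.ofReal c
        = ENNReal.ofReal (1 - Real.exp (-c)) + ENNReal.ofReal (c - (1 - Real.exp (-c))) := by
      rw [← ENNReal.ofReal_add h1mec hcq]
      ring_nf
    rw [h2] at h1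
    exact (ENNReal.add_le_add_iff_right ENNReal.ofReal_ne_top).1 h1
  -- conclude in the reals
  have hWP : ∫ t in Ioc (0:ℝ) T, Real.exp (-W t) * v t
      = ∫ t in Ioc (0:ℝ) T, Real.exp (-P t) * v t := by
    apply setIntegral_congr_fun measurableSet_Ioc
    intro t ht
    simp only [hWeq t (Ioc_subset_Icc_self ht)]
  rw [hJμ_eq, hWP] at hfinal
  have := (ENNReal.ofReal_le_ofReal_iff h1mec).1 hfinal
  simpa using this

theorem consumption_holder_aux
    (T γ₁ : ℝ) (hT : 0 < T) (hγ0 : 0 < γ₁) (hγ1 : γ₁ < 1)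
    (q : ℝ) (hq : q = 1 / (1 - γ₁))
    (v : ℝ → ℝ) (hvint : IntervalIntegrable v volume 0 T)
    (hv : ∀ t ∈ Icc (0:ℝ) T, 0 ≤ v t)
    (V : ℝ → ℝ) (hV : ∀ t, V t = ∫ u in (0:ℝ)..t, v u)
    (g : ℝ → ℝ) (hgcont : ContinuousOn g (Icc 0 T))
    (hgpos : ∀ t ∈ Icc (0:ℝ) T, 0 < g t)
    (key : ∫ t in Ioc (0:ℝ) T, Real.exp (-∫ u in (0:ℝ)..t, v u) * v t ≤
      1 - Real.exp (-∫ u in (0:ℝ)..T, v u))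
    (hbase_int' : IntegrableOn (fun t => Real.exp (-∫ u in (0:ℝ)..t, v u) * v t)
      (Ioc (0:ℝ) T) volume) :
    (∫ t in (0:ℝ)..T, g t * (Real.exp (-V t) * v t) ^ γ₁) ≤
      (1 - Real.exp (-V T)) ^ γ₁ * (∫ t in (0:ℝ)..T, g t ^ q) ^ (1 / q) := by
  set μ₀ : Measure ℝ := volume.restrict (Ioc 0 T) with hμ₀
  haveI : IsFiniteMeasure μ₀ := ⟨by
    rw [hμ₀, Measure.restrict_apply_univ]; exact measure_Ioc_lt_top⟩
  set p : ℝ := 1 / γ₁ with hp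
  have hpq : Real.HolderConjugate p q := by
    rw [Real.holderConjugate_iff]; constructor
    · rw [hp]; exact one_lt_one_div hγ0 hγ1
    · rw [hp, hq]; field_simp
      ring
  set base : ℝ → ℝ := fun t => Real.exp (-V t) * v t with hbase
  set h : ℝ → ℝ := fun t => base t ^ γ₁ with hh
  have hbaseeq : base = fun t => Real.exp (-∫ u in (0:ℝ)..t, v u) * v t := by
    funext t; simp only [hbase, hV t]
  have hbase_int : Integrable base μ₀ := by rw [hbaseeq]; exact hbase_int'
  have hbase_nn : 0 ≤ᵐ[μ₀] base := by
    apply ae_restrict_of_forall_mem measurableSet_Ioc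
    intro t ht
    exact mul_nonneg (Real.exp_pos _).le (hv t (Ioc_subset_Icc_self ht))
  have hbase_meas : AEStronglyMeasurable base μ₀ := hbase_int.aestronglyMeasurable
  have hrpowcont : Continuous fun x : ℝ => x ^ γ₁ := by
    apply continuous_iff_continuousAt.2
    intro x
    exact Real.continuousAt_rpow_const x γ₁ (Or.inr hγ0.le)
  have hh_meas : AEStronglyMeasurable h μ₀ := hrpowcont.comp_aestronglyMeasurable hbase_meas
  have hh_nn : 0 ≤ᵐ[μ₀] h := by
    filter_upwards [hbase_nn] with t ht
    exact Real.rpow_nonneg ht _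
  -- Memℒp for h
  have hMemh : MemLp h (ENNReal.ofReal p) μ₀ := by
    have h1 : MemLp base 1 μ₀ := memLp_one_iff_integrable.mpr hbase_int
    have h2 := (memLp_norm_rpow_iff (q := ENNReal.ofReal γ₁) (p := 1) hbase_meas
      (by simp [hγ0.le, hγ0.ne', hγ0]) (by simp)).mpr h1
    rw [ENNReal.toReal_ofReal hγ0.le] at h2
    have hexp : 1 / ENNReal.ofReal γ₁ = ENNReal.ofReal p := by
      rw [hp, one_div, one_div, ← ENNReal.ofReal_inv_of_pos hγ0]
    rw [hexp] at h2
    apply h2.ae_eq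
    filter_upwards [hbase_nn] with t ht
    rw [Real.norm_of_nonneg ht]
  -- Memℒp for g
  have hg_nn : 0 ≤ᵐ[μ₀] g := by
    apply ae_restrict_of_forall_mem measurableSet_Ioc
    intro t ht
    exact (hgpos t (Ioc_subset_Icc_self ht)).le
  have hg_meas : AEStronglyMeasurable g μ₀ :=
    (hgcont.mono Ioc_subset_Icc_self).aestronglyMeasurable measurableSet_Ioc
  have hMemg : MemLp g (ENNReal.ofReal q) μ₀ := by
    obtain ⟨C, hC⟩ := isCompact_Icc.exists_bound_of_continuousOn hgcont
    have htop : MemLp g ⊤ μ₀ := memLp_top_of_bound hg_meas C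
      (ae_restrict_of_forall_mem measurableSet_Ioc
        (fun t ht => hC t (Ioc_subset_Icc_self ht)))
    exact htop.mono_exponent le_top
  -- Hölder
  have HO := integral_mul_le_Lp_mul_Lq_of_nonneg hpq hh_nn hg_nn hMemh hMemg
  -- rewrite the p-integral of h
  have hIp : ∫ a, h a ^ p ∂μ₀ = ∫ a, base a ∂μ₀ := by
    apply MeasureTheory.integral_congr_ae
    filter_upwards [hbase_nn] with t ht
    rw [hh, ← Real.rpow_mul ht, mul_one_div_cancel hγ0.ne', Real.rpow_one]
  have hI0 : 0 ≤ ∫ a, base a ∂μ₀ := integral_nonneg_of_ae hbase_nn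
  have hkey : ∫ a, base a ∂μ₀ ≤ 1 - Real.exp (-V T) := by
    rw [hbaseeq, hV T]
    exact key
  have h1me : (0:ℝ) ≤ 1 - Real.exp (-V T) := by
    have : ∫ a, base a ∂μ₀ ≤ 1 - Real.exp (-V T) := hkey
    linarith [hI0]
  -- conclude
  rw [intervalIntegral.integral_of_le hT.le, intervalIntegral.integral_of_le hT.le]
  have hgq0 : 0 ≤ ∫ t in Ioc (0:ℝ) T, g t ^ q := by
    apply setIntegral_nonneg measurableSet_Ioc
    intro t ht
    exact Real.rpow_nonneg (hgpos t (Ioc_subset_Icc_self ht)).le _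
  calc ∫ t in Ioc (0:ℝ) T, g t * (Real.exp (-V t) * v t) ^ γ₁
      = ∫ a, h a * g a ∂μ₀ := by
        apply MeasureTheory.integral_congr_ae
        filter_upwards [] with t
        rw [hh, hbase]; ring
    _ ≤ (∫ a, h a ^ p ∂μ₀) ^ (1 / p) * (∫ a, g a ^ q ∂μ₀) ^ (1 / q) := HO
    _ = (∫ a, base a ∂μ₀) ^ γ₁ * (∫ t in Ioc (0:ℝ) T, g t ^ q) ^ (1 / q) := by
        rw [hIp, hp, one_div_one_div]
    _ ≤ (1 - Real.exp (-V T)) ^ γ₁ * (∫ t in Ioc (0:ℝ) T, g t ^ q) ^ (1 / q) := by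
        apply mul_le_mul_of_nonneg_right
        · exact Real.rpow_le_rpow hI0 hkey hγ0.le
        · exact Real.rpow_nonneg hgq0 _

/-- Hölder bound for the consumption part of the cost function:
`∫_0^T g_t (e^{-V_t} v_t)^{γ₁} dt ≤ (1 - e^{-V_T})^{γ₁} (∫_0^T g^q)^{1/q}`
with `q = 1/(1-γ₁)`. -/
theorem consumption_holder_bound
    (T γ₁ : ℝ) (hT : 0 < T) (hγ0 : 0 < γ₁) (hγ1 : γ₁ < 1)
    (q : ℝ) (hq : q = 1 / (1 - γ₁))
    (v : ℝ → ℝ) (hvint : IntervalIntegrable v volume 0 T)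
    (hv : ∀ t ∈ Icc (0:ℝ) T, 0 ≤ v t)
    (V : ℝ → ℝ) (hV : ∀ t, V t = ∫ u in (0:ℝ)..t, v u)
    (g : ℝ → ℝ) (hgcont : ContinuousOn g (Icc 0 T))
    (hgpos : ∀ t ∈ Icc (0:ℝ) T, 0 < g t) :
    (∫ t in (0:ℝ)..T, g t * (Real.exp (-V t) * v t) ^ γ₁) ≤
      (1 - Real.exp (-V T)) ^ γ₁ * (∫ t in (0:ℝ)..T, g t ^ q) ^ (1 / q) :=
  consumption_holder_aux T γ₁ hT hγ0 hγ1 q hq v hvint hv V hV g hgcont hgpos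
    (consumption_key T hT v hvint hv)
    (consumption_base_integrable T hT v hvint hv)
end
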